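/- There is no Lie subalgebra h of sl₃(ℝ) satisfying simultaneously: (i) h + p_min = sl₃(ℝ), (ii) the matrix e⁰ (with 1 in position (1,3) and zeros elsewhere) belongs to h, and (iii) h ∩ p_min is contained in the set of matrices of the form [[a,0,z],[0,−a−b,0],[0,0,b]]. -/

import Mathlib

open Matrix

attribute [local instance 100] LieRing.ofAssociativeRing

/-- The submodule `sl₃(ℝ)` of traceless `3 × 3` real matrices. -/
def sl3Sub : Submodule ℝ (Matrix (Fin 3) (Fin 3) ℝ) where
  carrier := {M | M.trace = 0}
  add_mem' := by
    intro M N hM hN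
    simp only [Set.mem_setOf_eq] at *
    rw [Matrix.trace_add, hM, hN, add_zero]
  zero_mem' := by simp
  smul_mem' := by
    intro c M hM
    simp only [Set.mem_setOf_eq] at *
    rw [Matrix.trace_smul, hM, smul_zero]

/-- The submodule `p_min` of upper triangular traceless `3 × 3` real matrices. -/
def pminSub : Submodule ℝ (Matrix (Fin 3) (Fin 3) ℝ) where
  carrier := {M | M.trace = 0 ∧ ∀ i j : Fin 3, j < i → M i j = 0}
  add_mem' := by
    rintro M N ⟨hM, hM'⟩ ⟨hN, hN'⟩
    refine ⟨by rw [Matrix.trace_add, hM, hN, add_zero], fun i j hij => ?_⟩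
    simp [Matrix.add_apply, hM' i j hij, hN' i j hij]
  zero_mem' := ⟨by simp, fun i j _ => rfl⟩
  smul_mem' := by
    rintro c M ⟨hM, hM'⟩
    refine ⟨by rw [Matrix.trace_smul, hM, smul_zero], fun i j hij => ?_⟩
    simp [Matrix.smul_apply, hM' i j hij]

/-- There is no Lie subalgebra `h` of `sl₃(ℝ)` such that: (i) `h + p_min = sl₃(ℝ)`,
(ii) `e⁰ = E₁₃ ∈ h`, and (iii) `h ∩ p_min` is contained in the set of matrices of the
form `[[a,0,z],[0,−a−b,0],[0,0,b]]`. -/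
theorem stmt7 :
    ¬ ∃ h : LieSubalgebra ℝ (Matrix (Fin 3) (Fin 3) ℝ),
      h.toSubmodule ⊔ pminSub = sl3Sub ∧
      (Matrix.single 0 2 1 : Matrix (Fin 3) (Fin 3) ℝ) ∈ h ∧
      (∀ M : Matrix (Fin 3) (Fin 3) ℝ, M ∈ h → M ∈ pminSub →
        ∃ a b z : ℝ, M = !![a, 0, z; 0, -a - b, 0; 0, 0, b]) := by
  rintro ⟨h, h1, h2, h3⟩
  have hmem : (Matrix.single 1 0 1 : Matrix (Fin 3) (Fin 3) ℝ) ∈ sl3Sub := by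
    simp [sl3Sub, Matrix.trace, Matrix.diag, Fin.sum_univ_three, Matrix.single]
  rw [← h1] at hmem
  obtain ⟨X, hX, P, hP, hsum⟩ := Submodule.mem_sup.mp hmem
  set e : Matrix (Fin 3) (Fin 3) ℝ := Matrix.single 0 2 1 with he
  have hM : ⁅X, e⁆ ∈ h := h.lie_mem hX h2
  have hMp : ⁅X, e⁆ ∈ pminSub := by
    constructor
    · simp [Ring.lie_def, Matrix.trace, Matrix.diag, Fin.sum_univ_three,
        Matrix.mul_apply, Matrix.sub_apply, he, Matrix.single, Matrix.of_apply]
    · intro i j hij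
      fin_cases i <;> fin_cases j <;> simp at hij <;>
        simp [Ring.lie_def, Matrix.sub_apply, Matrix.mul_apply, Fin.sum_univ_three,
          he, Matrix.single, Matrix.of_apply]
  obtain ⟨a, b, z, habz⟩ := h3 _ hM hMp
  have h12 : (⁅X, e⁆ : Matrix (Fin 3) (Fin 3) ℝ) 1 2 = 0 := by rw [habz]; simp
  have hX10 : X 1 0 = 1 := by
    have h10 := congrFun (congrFun hsum 1) 0
    have hP10 : P 1 0 = 0 := hP.2 1 0 (by norm_num)
    simp [Matrix.add_apply, hP10, Matrix.single, Matrix.of_apply] at h10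
    linarith
  rw [Ring.lie_def] at h12
  simp [Matrix.sub_apply, Matrix.mul_apply, Fin.sum_univ_three, he, Matrix.single,
    Matrix.of_apply, hX10] at h12
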